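/- (Intermediate claim in the proof of Theorem 7, Equations (EqTP5), (EqTP7), (EqTP8)) Define F : N -> N by F(0) = 4, F(1) = 8, F(2) = F(3) = 12, and, for each k >= 2: F(2^k + i) = 2*F(i) + F(i+1) for 0 <= i <= 2^k - 3; F(2^(k+1) - 2) = 2*F(2^k - 2) + F(2^k - 1) - 4; and F(2^(k+1) - 1) = 2^(k+2) + 4. Then for every n in N and every K with 2^K > n + 1, F(n) = 2 * (the coefficient of x^n in the polynomial prod_{k=0}^{K-1} (1 + x^(2^k - 1) + 2*x^(2^k)) in Z[x]), and consequently F(n) = 2 * (the sum, over all m >= 0 with m <= wt(n+m), of 2^(wt(n+m) - m) * binom(wt(n+m), m)). -/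

import Mathlib

open Polynomial

/-- The binary weight of `n`: the number of 1s in the binary expansion of `n`. -/
def wt (n : ℕ) : ℕ := (Nat.digits 2 n).sum

lemma two_le_pow {k : ℕ} (hk : 1 ≤ k) : 2 ≤ 2 ^ k :=
  le_trans (by norm_num) (Nat.pow_le_pow_right (by norm_num) hk)
lemma wt_zero : wt 0 = 0 := by simp [wt]
lemma wt_div2 (n : ℕ) : wt n = n % 2 + wt (n / 2) := by
  rcases Nat.eq_zero_or_pos n with h | h
  · simp [h, wt]
  · unfold wt
    rw [Nat.digits_def' (by norm_num : 1 < 2) h]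
    simp

lemma wt_le (n : ℕ) : wt n ≤ n := by
  induction n using Nat.strong_induction_on with
  | _ n ih =>
    rcases Nat.eq_zero_or_pos n with h | h
    · simp [h, wt_zero]
    · rw [wt_div2 n]
      have := ih (n / 2) (Nat.div_lt_self h (by norm_num))
      omega

lemma wt_lt (n : ℕ) (h : 2 ≤ n) : wt n < n := by
  rw [wt_div2 n]
  have h1 := wt_le (n / 2)
  omega

lemma wt_pow_add (L r : ℕ) (h : r < 2 ^ L) : wt (2 ^ L + r) = wt r + 1 := by
  induction L generalizing r with
  | zero =>
    interval_cases r
    norm_num [wt]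
  | succ L ih =>
    have h2 : (2 ^ (L + 1) + r) = 2 * (2 ^ L + r / 2) + r % 2 := by
      have := Nat.div_add_mod r 2; ring_nf; omega
    rw [h2, wt_div2]
    have hr2 : r / 2 < 2 ^ L := by omega
    have : (2 * (2 ^ L + r / 2) + r % 2) % 2 = r % 2 := by omega
    rw [this]
    have : (2 * (2 ^ L + r / 2) + r % 2) / 2 = 2 ^ L + r / 2 := by omega
    rw [this, ih _ hr2]
    rw [wt_div2 r]; ring

lemma wt_pow (L : ℕ) : wt (2 ^ L) = 1 := by
  have := wt_pow_add L 0 (by positivity)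
  simpa [wt_zero] using this

lemma wt_pred_pow (k : ℕ) : wt (2 ^ k - 1) = k := by
  induction k with
  | zero => simpa using wt_zero
  | succ k ih =>
    have h : 2 ^ (k + 1) - 1 = 2 ^ k + (2 ^ k - 1) := by
      have : 1 ≤ 2 ^ k := Nat.one_le_two_pow; omega
    rw [h, wt_pow_add k _ (by have : 1 ≤ 2 ^ k := Nat.one_le_two_pow; omega), ih]

lemma wt_bound {K n m : ℕ} (hK : n + 1 < 2 ^ K) (hm : m ≤ wt (n + m)) : n + m < 2 ^ K := by
  by_contra hc
  push_neg at hc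
  set s := n + m with hs
  have hs0 : s ≠ 0 := by have : 1 ≤ 2 ^ K := Nat.one_le_two_pow; omega
  set L := Nat.log 2 s with hL
  have h1 : 2 ^ L ≤ s := Nat.pow_log_le_self 2 hs0
  have h2 : s < 2 ^ (L + 1) := Nat.lt_pow_succ_log_self (by norm_num) s
  have hKL : K ≤ L := (Nat.le_log_iff_pow_le (by norm_num) hs0).mpr hc
  have hKL2 : 2 ^ K ≤ 2 ^ L := Nat.pow_le_pow_right (by norm_num) hKL
  have h3 : wt s = wt (s - 2 ^ L) + 1 := by
    have heq : s = 2 ^ L + (s - 2 ^ L) := by omega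
    rw [heq] at h2
    conv_lhs => rw [heq]
    rw [wt_pow_add L _ (by rw [pow_succ] at h2; omega)]
  have h4 := wt_le (s - 2 ^ L)
  omega

def fterm (n m : ℕ) : ℕ := 2 ^ (wt (n + m) - m) * (wt (n + m)).choose m

lemma fterm_zero {K n m : ℕ} (hK : n + 1 < 2 ^ K) (hge : 2 ^ K ≤ n + m) : fterm n m = 0 := by
  have : ¬ (m ≤ wt (n + m)) := fun h => absurd (wt_bound hK h) (by omega)
  unfold fterm
  rw [Nat.choose_eq_zero_of_lt (by omega), mul_zero]

lemma g_eq {K n : ℕ} (hK : n + 1 < 2 ^ K) :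
    (∑ᶠ m ∈ {m : ℕ | m ≤ wt (n + m)}, fterm n m) = ∑ m ∈ Finset.range (2 ^ K), fterm n m := by
  have hset : {m : ℕ | m ≤ wt (n + m)} =
      ↑((Finset.range (2 ^ K)).filter (fun m => m ≤ wt (n + m))) := by
    ext m
    simp only [Set.mem_setOf_eq, Finset.coe_filter, Finset.mem_range]
    constructor
    · intro h
      exact ⟨by have := wt_bound hK h; omega, h⟩
    · exact fun h => h.2
  rw [hset, finsum_mem_coe_finset]
  apply Finset.sum_filter_of_ne
  intro m _ hne
  by_contra hcon
  push_neg at hcon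
  exact hne (by unfold fterm; rw [Nat.choose_eq_zero_of_lt hcon, mul_zero])

lemma fterm_claim (k i : ℕ) (hk : 1 ≤ k) (hi : i ≤ 2 ^ k - 2) (m : ℕ) :
    fterm (2 ^ k + i) m =
      2 * fterm i m + (if 1 ≤ m ∧ i + m < 2 ^ k then fterm (i + 1) (m - 1) else 0) := by
  have hp : 2 ≤ 2 ^ k := two_le_pow hk
  have hps : 2 ^ (k + 1) = 2 * 2 ^ k := by rw [pow_succ]; ring
  cases m with
  | zero =>
    simp only [Nat.lt_irrefl, and_false, if_neg, Nat.le_zero]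
    have h1 : wt (2 ^ k + i + 0) = wt (i + 0) + 1 := by
      simp only [Nat.add_zero]
      rw [wt_pow_add k i (by omega)]
    unfold fterm
    rw [h1]
    simp [pow_succ]
    ring
  | succ m' =>
    by_cases hlt : i + (m' + 1) < 2 ^ k
    · rw [if_pos ⟨by omega, hlt⟩]
      have h1 : wt (2 ^ k + i + (m' + 1)) = wt (i + (m' + 1)) + 1 := by
        rw [show 2 ^ k + i + (m' + 1) = 2 ^ k + (i + (m' + 1)) by ring, wt_pow_add _ _ hlt]
      have h2 : wt (i + 1 + m') = wt (i + (m' + 1)) := by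
        congr 1
        omega
      unfold fterm
      simp only [Nat.add_sub_cancel]
      rw [h1, h2]
      generalize wt (i + (m' + 1)) = w
      by_cases hmw : m' + 1 ≤ w
      · have e1 : w + 1 - (m' + 1) = w - (m' + 1) + 1 := by omega
        have e2 : w - m' = w - (m' + 1) + 1 := by omega
        rw [Nat.choose_succ_succ, e1, e2, pow_succ]
        ring
      · by_cases hmw2 : m' = w
        · subst hmw2
          simp [Nat.choose_self, Nat.choose_eq_zero_of_lt (Nat.lt_succ_self m')]
        · rw [Nat.choose_eq_zero_of_lt (by omega), Nat.choose_eq_zero_of_lt (by omega),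
            Nat.choose_eq_zero_of_lt (by omega)]
          simp
    · rw [if_neg (by omega)]
      have hz1 : fterm (2 ^ k + i) (m' + 1) =  0 :=
        fterm_zero (K := k + 1) (by omega) (by omega)
      have hz2 : fterm i (m' + 1) = 0 :=
        fterm_zero (K := k) (by omega) (by omega)
      omega

noncomputable def G (n : ℕ) : ℕ := ∑ᶠ m ∈ {m : ℕ | m ≤ wt (n + m)}, fterm n m

lemma G_rec (k i : ℕ) (hk : 1 ≤ k) (hi : i ≤ 2 ^ k - 2) :
    G (2 ^ k + i) = 2 * G i +
      ∑ m ∈ Finset.range (2 ^ k),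
        (if 1 ≤ m ∧ i + m < 2 ^ k then fterm (i + 1) (m - 1) else 0) := by
  have hp : 2 ≤ 2 ^ k := two_le_pow hk
  have hps : 2 ^ (k + 1) = 2 * 2 ^ k := by rw [pow_succ]; ring
  have hK1 : (2 ^ k + i) + 1 < 2 ^ (k + 1) := by omega
  have h1 : G (2 ^ k + i) = ∑ m ∈ Finset.range (2 ^ k), fterm (2 ^ k + i) m := by
    rw [G, g_eq hK1]
    symm
    apply Finset.sum_subset (Finset.range_subset_range.mpr (by omega))
    intro m _ hm
    simp only [Finset.mem_range, not_lt] at hm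
    exact fterm_zero (K := k + 1) hK1 (by omega)
  rw [h1]
  have h2 : G i = ∑ m ∈ Finset.range (2 ^ k), fterm i m := by
    rw [G, g_eq (K := k) (by omega)]
  rw [h2, Finset.mul_sum, ← Finset.sum_add_distrib]
  exact Finset.sum_congr rfl fun m _ => fterm_claim k i hk hi m

lemma G_S5 (k i : ℕ) (hk : 2 ≤ k) (hi : i ≤ 2 ^ k - 3) :
    G (2 ^ k + i) = 2 * G i + G (i + 1) := by
  have hp : 4 ≤ 2 ^ k := by
    calc (4:ℕ) = 2 ^ 2 := by norm_num
    _ ≤ 2 ^ k := Nat.pow_le_pow_right (by norm_num) hk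
  rw [G_rec k i (by omega) (by omega)]
  congr 1
  have hstep : ∀ m, (if 1 ≤ m ∧ i + m < 2 ^ k then fterm (i + 1) (m - 1) else 0)
      = if 1 ≤ m then fterm (i + 1) (m - 1) else 0 := by
    intro m
    by_cases h1 : 1 ≤ m
    · by_cases h2 : i + m < 2 ^ k
      · rw [if_pos ⟨h1, h2⟩, if_pos h1]
      · rw [if_neg (by tauto), if_pos h1]
        exact (fterm_zero (K := k) (by omega) (by omega)).symm
    · rw [if_neg (by tauto), if_neg h1]
  simp only [hstep]
  obtain ⟨N, hN⟩ : ∃ N, 2 ^ k = N + 1 := ⟨2 ^ k - 1, by omega⟩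
  rw [hN, Finset.sum_range_succ']
  have hz : fterm (i + 1) N = 0 := fterm_zero (K := k) (by omega) (by omega)
  have hG : G (i + 1) = ∑ m ∈ Finset.range (N + 1), fterm (i + 1) m := by
    rw [G, g_eq (K := k) (by omega), hN]
  rw [hG, Finset.sum_range_succ, hz, add_zero]
  simp

lemma G_S6 (k : ℕ) (hk : 1 ≤ k) : G (2 ^ (k + 1) - 2) = 2 * G (2 ^ k - 2) + 2 ^ k := by
  have hp : 2 ≤ 2 ^ k := two_le_pow hk
  have hps : 2 ^ (k + 1) = 2 * 2 ^ k := by rw [pow_succ]; ring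
  have heq : 2 ^ (k + 1) - 2 = 2 ^ k + (2 ^ k - 2) := by omega
  rw [heq, G_rec k (2 ^ k - 2) hk (le_refl _)]
  congr 1
  rw [Finset.sum_eq_single 1]
  · rw [if_pos ⟨le_refl _, by omega⟩]
    have h1 : 2 ^ k - 2 + 1 = 2 ^ k - 1 := by omega
    rw [h1]
    show 2 ^ (wt (2 ^ k - 1 + 0) - 0) * (wt (2 ^ k - 1 + 0)).choose 0 = 2 ^ k
    simp [wt_pred_pow]
  · intro m _ hm
    rcases Nat.eq_zero_or_pos m with h | h
    · simp [h]
    · rw [if_neg (by omega)]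
  · intro h
    exact absurd (Finset.mem_range.mpr (by omega)) h

lemma G_S7 (k : ℕ) (hk : 1 ≤ k) : G (2 ^ k - 1) = 2 ^ k + 2 := by
  have hp : 2 ≤ 2 ^ k := two_le_pow hk
  have hps : 2 ^ (k + 1) = 2 * 2 ^ k := by rw [pow_succ]; ring
  have hK : (2 ^ k - 1) + 1 < 2 ^ (k + 1) := by omega
  rw [G, g_eq hK]
  have h3 : (Finset.range 3) ⊆ Finset.range (2 ^ (k + 1)) := Finset.range_subset_range.mpr (by omega)
  rw [← Finset.sum_subset h3]
  · have e0 : fterm (2 ^ k - 1) 0 = 2 ^ k := by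
      show 2 ^ (wt (2 ^ k - 1 + 0) - 0) * (wt (2 ^ k - 1 + 0)).choose 0 = 2 ^ k
      simp [wt_pred_pow]
    have e1 : fterm (2 ^ k - 1) 1 = 1 := by
      show 2 ^ (wt (2 ^ k - 1 + 1) - 1) * (wt (2 ^ k - 1 + 1)).choose 1 = 1
      have : 2 ^ k - 1 + 1 = 2 ^ k + 0 := by omega
      rw [this, wt_pow_add k 0 (by omega)]
      norm_num [wt]
    have e2 : fterm (2 ^ k - 1) 2 = 1 := by
      show 2 ^ (wt (2 ^ k - 1 + 2) - 2) * (wt (2 ^ k - 1 + 2)).choose 2 = 1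
      have : 2 ^ k - 1 + 2 = 2 ^ k + 1 := by omega
      rw [this, wt_pow_add k 1 (by omega)]
      norm_num [wt]
    rw [Finset.sum_range_succ, Finset.sum_range_succ, Finset.sum_range_succ,
      Finset.sum_range_zero, e0, e1, e2]
    omega
  · intro m _ hm
    simp only [Finset.mem_range, not_lt] at hm
    by_cases hcase : m - 1 < 2 ^ k
    · have h4 : 2 ^ k - 1 + m = 2 ^ k + (m - 1) := by omega
      have h5 : wt (2 ^ k - 1 + m) < m := by
        rw [h4, wt_pow_add k _ hcase]
        have := wt_lt (m - 1) (by omega)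
        omega
      unfold fterm
      rw [Nat.choose_eq_zero_of_lt h5, mul_zero]
    · exact fterm_zero (K := k + 1) hK (by omega)


lemma G_0 : G 0 = 2 := by
  rw [G, g_eq (K := 1) (by norm_num)]
  norm_num [Finset.sum_range_succ, fterm, wt, Nat.choose]
lemma G_1 : G 1 = 4 := by
  rw [G, g_eq (K := 2) (by norm_num)]
  norm_num [Finset.sum_range_succ, fterm, wt, Nat.choose]
lemma G_2 : G 2 = 6 := by
  rw [G, g_eq (K := 2) (by norm_num)]
  norm_num [Finset.sum_range_succ, fterm, wt, Nat.choose]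
lemma G_3 : G 3 = 6 := by
  rw [G, g_eq (K := 3) (by norm_num)]
  norm_num [Finset.sum_range_succ, fterm, wt, Nat.choose]

open Polynomial

noncomputable def PK (K : ℕ) : Polynomial ℤ :=
  ∏ k ∈ Finset.range K, (1 + X ^ (2 ^ k - 1) + 2 * X ^ (2 ^ k))

lemma PK_succ (K : ℕ) :
    PK (K + 1) = PK K * (1 + X ^ (2 ^ K - 1) + 2 * X ^ (2 ^ K)) := by
  rw [PK, Finset.prod_range_succ, PK]

lemma coeff_tri (p : Polynomial ℤ) (a b n : ℕ) :
    (p * (1 + X ^ a + 2 * X ^ b)).coeff n =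
      p.coeff n + (if a ≤ n then p.coeff (n - a) else 0)
        + 2 * (if b ≤ n then p.coeff (n - b) else 0) := by
  have h : p * (1 + X ^ a + 2 * X ^ b) = p + p * X ^ a + (p * X ^ b + p * X ^ b) := by
    ring
  rw [h, coeff_add, coeff_add, coeff_add, coeff_mul_X_pow', coeff_mul_X_pow']
  ring

lemma PK_vanish (K n : ℕ) (h : 2 ^ K ≤ n) : (PK K).coeff n = 0 := by
  induction K generalizing n with
  | zero =>
    rw [PK]
    simp only [Finset.range_zero, Finset.prod_empty, Polynomial.coeff_one]
    rw [if_neg (by simp only [pow_zero] at h; omega)]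
  | succ K ih =>
    have hps : 2 ^ (K + 1) = 2 * 2 ^ K := by rw [pow_succ]; ring
    have hp : 1 ≤ 2 ^ K := Nat.one_le_two_pow
    rw [PK_succ, coeff_tri]
    rw [ih n (by omega)]
    rw [if_pos (by omega), if_pos (by omega), ih _ (by omega), ih _ (by omega)]
    ring
lemma PK_top (K : ℕ) : (PK K).coeff (2 ^ K - 1) = 2 ^ K := by
  induction K with
  | zero => simp [PK]
  | succ K ih =>
    have hps : 2 ^ (K + 1) = 2 * 2 ^ K := by rw [pow_succ]; ring
    have hp : 1 ≤ 2 ^ K := Nat.one_le_two_pow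
    rw [PK_succ, coeff_tri]
    rw [PK_vanish K _ (by omega), if_pos (by omega), if_pos (by omega)]
    rw [show 2 ^ (K + 1) - 1 - (2 ^ K - 1) = 2 ^ K by omega,
      show 2 ^ (K + 1) - 1 - 2 ^ K = 2 ^ K - 1 by omega,
      PK_vanish K _ (by omega), ih]
    push_cast
    ring
lemma PK_coeff0 (K : ℕ) (h : 1 ≤ K) : (PK K).coeff 0 = 2 := by
  induction K with
  | zero => omega
  | succ K ih =>
    rcases Nat.eq_zero_or_pos K with h0 | h0
    · subst h0
      rw [PK_succ, coeff_tri]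
      rw [show (PK 0) = 1 by simp [PK]]
      norm_num
    · have hp : 2 ≤ 2 ^ K := by
        calc (2:ℕ) = 2 ^ 1 := by norm_num
        _ ≤ 2 ^ K := Nat.pow_le_pow_right (by norm_num) h0
      rw [PK_succ, coeff_tri, if_neg (by omega), if_neg (by omega), ih h0]
      ring
lemma PK_stable (n K K' : ℕ) (hK : n + 1 < 2 ^ K) (hKK : K ≤ K') :
    (PK K').coeff n = (PK K).coeff n := by
  induction K' , hKK using Nat.le_induction with
  | base => rfl
  | succ K' hKK ih =>
    have hmono : 2 ^ K ≤ 2 ^ K' := Nat.pow_le_pow_right (by norm_num) hKK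
    rw [PK_succ, coeff_tri, if_neg (by omega), if_neg (by omega), ih]
    ring

open Polynomial
noncomputable def cP (n : ℕ) : ℤ := (PK (n + 2)).coeff n

lemma cP_eq {n K : ℕ} (hK : n + 1 < 2 ^ K) : (PK K).coeff n = cP n := by
  have h2 : n + 1 < 2 ^ (n + 2) := by
    have := (n + 1).lt_two_pow_self
    have h3 : 2 ^ (n + 1) ≤ 2 ^ (n + 2) := Nat.pow_le_pow_right (by norm_num) (by omega)
    omega
  rw [← PK_stable n K (max K (n + 2)) hK (le_max_left _ _),
    PK_stable n (n + 2) (max K (n + 2)) h2 (le_max_right _ _), cP]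

lemma cP_0 : cP 0 = 2 := by
  rw [← cP_eq (K := 1) (by norm_num)]; exact PK_coeff0 1 le_rfl
lemma coeff_PK1 : (PK 1).coeff 1 = 2 := by
  rw [show (1:ℕ) = 0 + 1 from rfl, PK_succ, coeff_tri]
  norm_num [show PK 0 = 1 by simp [PK], Polynomial.coeff_one]
lemma cP_1 : cP 1 = 4 := by
  rw [← cP_eq (K := 2) (by norm_num), PK_succ, coeff_tri]
  norm_num [coeff_PK1, PK_coeff0 1 le_rfl]
lemma cP_2 : cP 2 = 6 := by
  rw [← cP_eq (K := 2) (by norm_num), PK_succ, coeff_tri]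
  norm_num [coeff_PK1, PK_coeff0 1 le_rfl, PK_vanish 1 2 (by norm_num)]
lemma cP_3 : cP 3 = 6 := by
  rw [← cP_eq (K := 3) (by norm_num), PK_succ, coeff_tri]
  have h : (PK 2).coeff 3 = 4 := by
    rw [show (2:ℕ) = 1 + 1 from rfl, PK_succ, coeff_tri]
    norm_num [coeff_PK1, PK_vanish 1 2 (by norm_num), PK_vanish 1 3 (by norm_num)]
  norm_num [h, PK_coeff0 2 (by norm_num)]

lemma cP_S5 (k i : ℕ) (hk : 2 ≤ k) (hi : i ≤ 2 ^ k - 3) :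
    cP (2 ^ k + i) = 2 * cP i + cP (i + 1) := by
  have hp : 4 ≤ 2 ^ k := by
    calc (4:ℕ) = 2 ^ 2 := by norm_num
    _ ≤ 2 ^ k := Nat.pow_le_pow_right (by norm_num) hk
  have hps : 2 ^ (k + 1) = 2 * 2 ^ k := by rw [pow_succ]; ring
  rw [← cP_eq (K := k + 1) (by omega), PK_succ, coeff_tri,
    if_pos (by omega : 2 ^ k - 1 ≤ 2 ^ k + i), if_pos (by omega : 2 ^ k ≤ 2 ^ k + i),
    PK_vanish k _ (by omega),
    show 2 ^ k + i - (2 ^ k - 1) = i + 1 by omega,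
    show 2 ^ k + i - 2 ^ k = i by omega,
    cP_eq (K := k) (by omega), cP_eq (K := k) (by omega)]
  ring

lemma cP_S6 (k : ℕ) (hk : 1 ≤ k) :
    cP (2 ^ (k + 1) - 2) = 2 * cP (2 ^ k - 2) + 2 ^ k := by
  have hp : 2 ≤ 2 ^ k := two_le_pow hk
  have hps : 2 ^ (k + 1) = 2 * 2 ^ k := by rw [pow_succ]; ring
  rw [← cP_eq (K := k + 1) (by omega), PK_succ, coeff_tri,
    if_pos (by omega : 2 ^ k - 1 ≤ 2 ^ (k + 1) - 2),
    if_pos (by omega : 2 ^ k ≤ 2 ^ (k + 1) - 2),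
    PK_vanish k _ (by omega),
    show 2 ^ (k + 1) - 2 - (2 ^ k - 1) = 2 ^ k - 1 by omega,
    show 2 ^ (k + 1) - 2 - 2 ^ k = 2 ^ k - 2 by omega,
    PK_top k, cP_eq (K := k) (by omega)]
  push_cast
  ring

lemma cP_S7 (k : ℕ) (hk : 1 ≤ k) : cP (2 ^ k - 1) = 2 ^ k + 2 := by
  have hp : 2 ≤ 2 ^ k := two_le_pow hk
  have hps : 2 ^ (k + 1) = 2 * 2 ^ k := by rw [pow_succ]; ring
  rw [← cP_eq (K := k + 1) (by omega), PK_succ, coeff_tri,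
    if_pos (le_refl _), if_neg (by omega : ¬ 2 ^ k ≤ 2 ^ k - 1),
    PK_top k, Nat.sub_self, PK_coeff0 k hk]
  ring

lemma key (F : ℕ → ℕ) (c : ℕ → ℤ)
    (hF0 : F 0 = 4) (hF1 : F 1 = 8) (hF2 : F 2 = 12) (hF3 : F 3 = 12)
    (hFrec : ∀ k, 2 ≤ k → ∀ i, i ≤ 2 ^ k - 3 →
      F (2 ^ k + i) = 2 * F i + F (i + 1))
    (hFmid : ∀ k, 2 ≤ k →
      F (2 ^ (k + 1) - 2) + 4 = 2 * F (2 ^ k - 2) + F (2 ^ k - 1))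
    (hFtop : ∀ k, 2 ≤ k → F (2 ^ (k + 1) - 1) = 2 ^ (k + 2) + 4)
    (h0 : c 0 = 2) (h1 : c 1 = 4) (h2 : c 2 = 6) (h3 : c 3 = 6)
    (hS5 : ∀ k, 2 ≤ k → ∀ i, i ≤ 2 ^ k - 3 → c (2 ^ k + i) = 2 * c i + c (i + 1))
    (hS6 : ∀ k, 2 ≤ k → c (2 ^ (k + 1) - 2) = 2 * c (2 ^ k - 2) + 2 ^ k)
    (hS7 : ∀ k, 2 ≤ k → c (2 ^ k - 1) = 2 ^ k + 2) :
    ∀ n, (F n : ℤ) = 2 * c n := by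
  intro n
  induction n using Nat.strong_induction_on with
  | _ n ih =>
    rcases n with _ | _ | _ | _ | m
    · rw [hF0, h0]; norm_num
    · rw [hF1, h1]; norm_num
    · rw [hF2, h2]; norm_num
    · rw [hF3, h3]; norm_num
    · show (F (m + 4) : ℤ) = 2 * c (m + 4)
      have ih : ∀ j, j < m + 4 → (F j : ℤ) = 2 * c j := fun j hj => ih j (by omega)
      set n' := m + 4 with hn'
      have hn4 : 4 ≤ n' := by omega
      set k := Nat.log 2 n' with hk
      have hle : 2 ^ k ≤ n' := Nat.pow_log_le_self 2 (by omega)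
      have hlt : n' < 2 ^ (k + 1) := Nat.lt_pow_succ_log_self (by norm_num) n'
      have hk2 : 2 ≤ k := by
        by_contra hcon
        push_neg at hcon
        interval_cases k <;> omega
      have hps : 2 ^ (k + 1) = 2 * 2 ^ k := by rw [pow_succ]; ring
      have hp4 : 4 ≤ 2 ^ k := by
        calc (4:ℕ) = 2 ^ 2 := by norm_num
        _ ≤ 2 ^ k := Nat.pow_le_pow_right (by norm_num) hk2
      set i := n' - 2 ^ k with hi
      by_cases hc1 : i ≤ 2 ^ k - 3
      · have hn : n' = 2 ^ k + i := by omega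
        have e1 := ih i (by omega)
        have e2 := ih (i + 1) (by omega)
        rw [hn, hFrec k hk2 i hc1, hS5 k hk2 i hc1]
        push_cast
        rw [e1, e2]
        ring
      · by_cases hc2 : i = 2 ^ k - 2
        · have hn : n' = 2 ^ (k + 1) - 2 := by omega
          have e1 := ih (2 ^ k - 2) (by omega)
          have e2 := ih (2 ^ k - 1) (by omega)
          have hmcast : ((F (2 ^ (k + 1) - 2) : ℤ)) + 4
              = 2 * (F (2 ^ k - 2) : ℤ) + (F (2 ^ k - 1) : ℤ) := by
            exact_mod_cast congrArg (Nat.cast : ℕ → ℤ) (hFmid k hk2)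
          rw [e1, e2, hS7 k hk2] at hmcast
          rw [hn, hS6 k hk2]
          push_cast at hmcast
          linarith
        · have hn : n' = 2 ^ (k + 1) - 1 := by omega
          rw [hn, hFtop k hk2, hS7 (k + 1) (by omega)]
          push_cast
          ring

/-- **(EqTP5), (EqTP7), (EqTP8).** Let `F` satisfy `F 0 = 4`, `F 1 = 8`,
`F 2 = F 3 = 12`, and for each `k ≥ 2`: `F (2^k + i) = 2 F i + F (i+1)` for
`0 ≤ i ≤ 2^k - 3`, `F (2^(k+1) - 2) = 2 F (2^k - 2) + F (2^k - 1) - 4`, and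
`F (2^(k+1) - 1) = 2^(k+2) + 4`.  Then for every `n` and every `K` with
`2^K > n + 1`, `F n` equals twice the coefficient of `x^n` in
`∏_{k=0}^{K-1} (1 + x^(2^k - 1) + 2 x^(2^k))` in `ℤ[x]`, and consequently
`F n = 2 ∑_{m ≥ 0, m ≤ wt(n+m)} 2^(wt(n+m)-m) C(wt(n+m), m)`. -/
theorem F_generating_function_and_formula
    (F : ℕ → ℕ)
    (hF0 : F 0 = 4) (hF1 : F 1 = 8) (hF2 : F 2 = 12) (hF3 : F 3 = 12)
    (hFrec : ∀ k, 2 ≤ k → ∀ i, i ≤ 2 ^ k - 3 →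
      F (2 ^ k + i) = 2 * F i + F (i + 1))
    (hFmid : ∀ k, 2 ≤ k →
      F (2 ^ (k + 1) - 2) + 4 = 2 * F (2 ^ k - 2) + F (2 ^ k - 1))
    (hFtop : ∀ k, 2 ≤ k → F (2 ^ (k + 1) - 1) = 2 ^ (k + 2) + 4) :
    (∀ n K, n + 1 < 2 ^ K →
      (F n : ℤ) =
        2 * ((∏ k ∈ Finset.range K,
              (1 + X ^ (2 ^ k - 1) + 2 * X ^ (2 ^ k)) : Polynomial ℤ)).coeff n) ∧
    (∀ n, F n =
        2 * ∑ᶠ m ∈ {m : ℕ | m ≤ wt (n + m)},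
              2 ^ (wt (n + m) - m) * (wt (n + m)).choose m) := by
  have hcP := key F cP hF0 hF1 hF2 hF3 hFrec hFmid hFtop cP_0 cP_1 cP_2 cP_3
    (fun k hk i hi => cP_S5 k i hk hi)
    (fun k hk => cP_S6 k (by omega)) (fun k hk => cP_S7 k (by omega))
  have hG := key F (fun n => (G n : ℤ)) hF0 hF1 hF2 hF3 hFrec hFmid hFtop
    (show (G 0 : ℤ) = 2 by exact_mod_cast G_0)
    (show (G 1 : ℤ) = 4 by exact_mod_cast G_1)
    (show (G 2 : ℤ) = 6 by exact_mod_cast G_2)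
    (show (G 3 : ℤ) = 6 by exact_mod_cast G_3)
    (fun k hk i hi =>
      show (G (2 ^ k + i) : ℤ) = 2 * (G i : ℤ) + (G (i + 1) : ℤ) by
        exact_mod_cast G_S5 k i hk hi)
    (fun k hk =>
      show (G (2 ^ (k + 1) - 2) : ℤ) = 2 * (G (2 ^ k - 2) : ℤ) + 2 ^ k by
        exact_mod_cast G_S6 k (by omega))
    (fun k hk =>
      show (G (2 ^ k - 1) : ℤ) = 2 ^ k + 2 by exact_mod_cast G_S7 k (by omega))
  constructor
  · intro n K hK
    rw [hcP n, ← cP_eq hK, PK]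
  · intro n
    have h3 : (F n : ℤ) = 2 * (G n : ℤ) := hG n
    have h2 : F n = 2 * G n := by exact_mod_cast h3
    simpa [G, fterm] using h2
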